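/- For every integer k ≥ 1, if G and H are finite connected simple graphs, then γ_k(G × H) ≥ γ_k(G) + γ_k(H) − 1, where γ_k(G × H) denotes the minimum cardinality of a set D of vertices of the direct product G × H such that every vertex of G × H is at distance at most k in G × H from some vertex of D. -/

import Mathlib

/-- `S` is a distance `k`-dominating set of `G`: every vertex is joined to some
vertex of `S` by a path (walk) of length at most `k`. -/
def SimpleGraph.IsKDomSet {V : Type*} (G : SimpleGraph V) (k : ℕ) (S : Set V) : Prop :=
  ∀ v : V, ∃ u ∈ S, ∃ p : G.Walk u v, p.length ≤ k

/-- The distance `k`-domination number of `G`: the minimum cardinality of a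
distance `k`-dominating set. -/
noncomputable def SimpleGraph.kDomNum {V : Type*} (G : SimpleGraph V) (k : ℕ) : ℕ :=
  sInf {n : ℕ | ∃ S : Set V, G.IsKDomSet k S ∧ S.ncard = n}

/-- The direct (tensor) product of two simple graphs: `(g₁,h₁)` and `(g₂,h₂)` are adjacent
iff `g₁` is adjacent to `g₂` in `G` and `h₁` is adjacent to `h₂` in `H`. -/
def SimpleGraph.directProd {α β : Type*} (G : SimpleGraph α) (H : SimpleGraph β) :
    SimpleGraph (α × β) where
  Adj x y := G.Adj x.1 y.1 ∧ H.Adj x.2 y.2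
  symm := ⟨fun _ _ h => ⟨h.1.symm, h.2.symm⟩⟩
  loopless := ⟨fun x h => G.irrefl h.1⟩

private def fstHom {α β : Type*} (G : SimpleGraph α) (H : SimpleGraph β) :
    G.directProd H →g G where
  toFun := Prod.fst
  map_rel' := fun h => h.1

private def sndHom {α β : Type*} (G : SimpleGraph α) (H : SimpleGraph β) :
    G.directProd H →g H where
  toFun := Prod.snd
  map_rel' := fun h => h.2

private lemma walk_fst {α β : Type*} {G : SimpleGraph α} {H : SimpleGraph β} {x y : α × β}
    (p : (G.directProd H).Walk x y) : ∃ q : G.Walk x.1 y.1, q.length = p.length :=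
  ⟨p.map (fstHom G H), SimpleGraph.Walk.length_map _ _⟩

private lemma walk_snd {α β : Type*} {G : SimpleGraph α} {H : SimpleGraph β} {x y : α × β}
    (p : (G.directProd H).Walk x y) : ∃ q : H.Walk x.2 y.2, q.length = p.length :=
  ⟨p.map (sndHom G H), SimpleGraph.Walk.length_map _ _⟩

/-- For connected graphs `G` and `H`, `γ_k(G × H) ≥ γ_k(G) + γ_k(H) − 1`. -/
theorem kDomNum_directProd_ge {α β : Type*} [Fintype α] [Fintype β]
    (k : ℕ) (hk : 1 ≤ k) (G : SimpleGraph α) (H : SimpleGraph β)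
    (hG : G.Connected) (hH : H.Connected) :
    (G.kDomNum k : ℤ) + (H.kDomNum k : ℤ) - 1 ≤ ((G.directProd H).kDomNum k : ℤ) := by
  classical
  obtain ⟨a0⟩ := hG.nonempty
  obtain ⟨b0⟩ := hH.nonempty
  have hne : {n : ℕ | ∃ S : Set (α × β), (G.directProd H).IsKDomSet k S ∧ S.ncard = n}.Nonempty :=
    ⟨(Set.univ : Set (α × β)).ncard, Set.univ,
      fun v => ⟨v, Set.mem_univ v, SimpleGraph.Walk.nil, by simp⟩, rfl⟩
  obtain ⟨D, hD, hDcard⟩ : ∃ S : Set (α × β), (G.directProd H).IsKDomSet k S ∧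
      S.ncard = (G.directProd H).kDomNum k := Nat.sInf_mem hne
  set P : Finset (α × β) → Prop := fun E =>
    ∀ y : β, ∃ d ∈ E, ∃ x : α, ∃ p : (G.directProd H).Walk d (x, y), p.length ≤ k with hP
  have hPDf : P D.toFinset := by
    intro y
    obtain ⟨u, hu, p, hp⟩ := hD (a0, y)
    exact ⟨u, Set.mem_toFinset.2 hu, a0, p, hp⟩
  obtain ⟨E, hEmem, hEmin⟩ := Finset.exists_min_image
      ((D.toFinset.powerset).filter P) Finset.card
      ⟨D.toFinset, Finset.mem_filter.2 ⟨Finset.mem_powerset_self _, hPDf⟩⟩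
  rw [Finset.mem_filter, Finset.mem_powerset] at hEmem
  obtain ⟨hEsub, hPE⟩ := hEmem
  obtain ⟨t₀, ht₀, -⟩ := hPE b0
  have hnotP : ¬ P (E.erase t₀) := by
    intro hcon
    have hle := hEmin (E.erase t₀) (Finset.mem_filter.2
      ⟨Finset.mem_powerset.2 ((Finset.erase_subset _ _).trans hEsub), hcon⟩)
    have hlt := Finset.card_erase_lt_of_mem ht₀
    omega
  have hkey : ∃ y : β, ∀ d ∈ E.erase t₀, ∀ x : α,
      ∀ p : (G.directProd H).Walk d (x, y), ¬ p.length ≤ k := by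
    by_contra hcon
    push_neg at hcon
    exact hnotP hcon
  obtain ⟨y₀, hy₀⟩ := hkey
  set A : Finset α := ((D.toFinset \ E) ∪ {t₀}).image Prod.fst with hA
  set B : Finset β := E.image Prod.snd with hB
  have hAdom : G.IsKDomSet k ↑A := by
    intro x
    obtain ⟨u, hu, p, hp⟩ := hD (x, y₀)
    obtain ⟨q, hq⟩ := walk_fst p
    have huA : u.1 ∈ A := by
      rcases em (u ∈ E) with hi | hi
      · have heq : u = t₀ := by
          by_contra hne'
          exact hy₀ u (Finset.mem_erase.2 ⟨hne', hi⟩) x p hp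
        refine Finset.mem_image.2 ⟨u, Finset.mem_union_right _ ?_, rfl⟩
        simp [heq]
      · exact Finset.mem_image.2 ⟨u, Finset.mem_union_left _
          (Finset.mem_sdiff.2 ⟨Set.mem_toFinset.2 hu, hi⟩), rfl⟩
    exact ⟨u.1, Finset.mem_coe.2 huA, q, by omega⟩
  have hBdom : H.IsKDomSet k ↑B := by
    intro y
    obtain ⟨d, hd, x, p, hp⟩ := hPE y
    obtain ⟨q, hq⟩ := walk_snd p
    exact ⟨d.2, Finset.mem_coe.2 (Finset.mem_image.2 ⟨d, hd, rfl⟩), q, by omega⟩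
  have h1 : G.kDomNum k ≤ A.card :=
    Nat.sInf_le ⟨(A : Set α), hAdom, Set.ncard_coe_finset A⟩
  have h2 : H.kDomNum k ≤ B.card :=
    Nat.sInf_le ⟨(B : Set β), hBdom, Set.ncard_coe_finset B⟩
  have hAcard : A.card ≤ (D.toFinset.card - E.card) + 1 := by
    calc A.card ≤ ((D.toFinset \ E) ∪ {t₀}).card := Finset.card_image_le
      _ ≤ (D.toFinset \ E).card + 1 := by
          simpa using Finset.card_union_le (D.toFinset \ E) {t₀}
      _ = (D.toFinset.card - E.card) + 1 := by rw [Finset.card_sdiff_of_subset hEsub]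
  have hBcard : B.card ≤ E.card := Finset.card_image_le
  have hEle : E.card ≤ D.toFinset.card := Finset.card_le_card hEsub
  have hDn : D.toFinset.card = (G.directProd H).kDomNum k := by
    rw [← hDcard, Set.ncard_eq_toFinset_card']
  omega
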